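/- arXiv:1604.01529 — 5 statements merged into one kernel-verified Lean document; each statement's English description precedes it below -/
import Mathlib

section
/- Let C1 and C2 be two size-k committees with |C1 ∩ C2| = k−1. Then the range of the ℚ-linear map α_{C1,C2} : ℚ^L → ℚ^{[m]_k} is a ℚ-subspace of dimension C(m,k) − 1. -/
open Finset

abbrev Vote (A : Type*) [Fintype A] := A ≃ Fin (Fintype.card A)

structure DecisionRule (A : Type*) [Fintype A] [DecidableEq A] (k : ℕ) (R : Type*) where
  F : (Vote A → R) → {C : Finset A // C.card = k} → {C : Finset A // C.card = k} → ℤ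
  antisymm : ∀ P C1 C2, F P C1 C2 = - F P C2 C1
  mem_range : ∀ P C1 C2, F P C1 C2 = -1 ∨ F P C1 C2 = 0 ∨ F P C1 C2 = 1

abbrev Committee (A : Type*) (k : ℕ) := {C : Finset A // C.card = k}

section Defs

variable {A : Type*} [Fintype A] [DecidableEq A] {k : ℕ}

/-- The set of positions occupied by the members of `C` in vote `π`. -/
def Vote.pos (π : Vote A) (C : Finset A) : Finset (Fin (Fintype.card A)) := C.image π

/-- The action of a candidate permutation on a vote. -/
def permVote (σ : Equiv.Perm A) (π : Vote A) : Vote A := σ.symm.trans π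

/-- The action of a candidate permutation on a voting situation. -/
def permSitu {R : Type*} (σ : Equiv.Perm A) (P : Vote A → R) : Vote A → R :=
  fun π => P (σ.trans π)

/-- The action of a candidate permutation on a committee. -/
def permComm (σ : Equiv.Perm A) (C : Committee A k) : Committee A k :=
  ⟨C.1.image σ, by rw [Finset.card_image_of_injective _ σ.injective]; exact C.2⟩

/-- Committee position `I` (weakly) dominates committee position `J`:
listing both increasingly, each element of `I` is at most the corresponding element of `J`. -/
def Dominates {m : ℕ} (I J : Finset (Fin m)) : Prop :=
  List.Forall₂ (· ≤ ·) (I.sort (· ≤ ·)) (J.sort (· ≤ ·))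

namespace DecisionRule

variable {R : Type*} [AddCommMonoid R]

def Neutral (f : DecisionRule A k R) : Prop :=
  ∀ (σ : Equiv.Perm A) (P : Vote A → R) (C1 C2 : Committee A k),
    f.F (permSitu σ P) (permComm σ C1) (permComm σ C2) = f.F P C1 C2

def Consistent (f : DecisionRule A k R) : Prop :=
  ∀ (P Q : Vote A → R) (C1 C2 : Committee A k),
    (f.F P C1 C2 = 1 → 0 ≤ f.F Q C1 C2 → f.F (P + Q) C1 C2 = 1) ∧
    (0 ≤ f.F P C1 C2 → 0 ≤ f.F Q C1 C2 → 0 ≤ f.F (P + Q) C1 C2)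

def IsContinuous (f : DecisionRule A k R) : Prop :=
  ∀ (P1 P2 : Vote A → R) (C1 C2 : Committee A k),
    f.F P2 C1 C2 = 1 → ∃ n : ℕ, f.F (P1 + n • P2) C1 C2 = 1

def Transitive (f : DecisionRule A k R) : Prop :=
  ∀ (P : Vote A → R) (C1 C2 C3 : Committee A k),
    0 ≤ f.F P C1 C2 → 0 ≤ f.F P C2 C3 → 0 ≤ f.F P C1 C3

end DecisionRule

def DecisionRule.CommitteeDominance {A : Type*} [Fintype A] [DecidableEq A] {k : ℕ}
    {R : Type*} [CommSemiring R] [PartialOrder R] [IsOrderedRing R] (f : DecisionRule A k R) : Prop :=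
  ∀ (P : Vote A → R) (C1 C2 : Committee A k), (∀ π, 0 ≤ P π) →
    (∀ π, 0 < P π → Dominates (π.pos C1.1) (π.pos C2.1)) → 0 ≤ f.F P C1 C2

/-- The `λ`-score of a committee `C` in an integer voting situation `P`. -/
noncomputable def scoreN (lam : Finset (Fin (Fintype.card A)) → ℝ) (C : Finset A)
    (P : Vote A → ℕ) : ℝ :=
  ∑ π : Vote A, (P π : ℝ) * lam (π.pos C)

end Defs

/-- The committee position-difference function `α_{C1,C2}`:
`α_{C1,C2}(P)[I]` is the total (rational) number of votes in `P` that rank `C1` on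
position `I` minus the total number of votes in `P` that rank `C2` on position `I`. -/
def alphaFun {A : Type*} [Fintype A] [DecidableEq A] (C1 C2 : Finset A)
    (P : Vote A → ℚ) (I : Finset (Fin (Fintype.card A))) : ℚ :=
  ∑ π : Vote A, P π * ((if π.pos C1 = I then 1 else 0) - (if π.pos C2 = I then 1 else 0))

/-- `α_{C1,C2}` as a `ℚ`-linear map from `ℚ^L` to `ℚ^{[m]_k}` (realized inside
`ℚ^{Finset (Fin m)}`; it vanishes on coordinates that are not committee positions). -/
def alphaMap {A : Type*} [Fintype A] [DecidableEq A] (C1 C2 : Finset A) :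
    (Vote A → ℚ) →ₗ[ℚ] (Finset (Fin (Fintype.card A)) → ℚ) where
  toFun P := alphaFun C1 C2 P
  map_add' P Q := by
    funext I
    simp only [alphaFun, Pi.add_apply, add_mul, Finset.sum_add_distrib]
  map_smul' q P := by
    funext I
    simp only [alphaFun, Pi.smul_apply, smul_eq_mul, RingHom.id_apply, Finset.mul_sum,
      mul_assoc]


section Aux

/-- Indicator function of a committee position. -/
def eind {m : ℕ} (X : Finset (Fin m)) : Finset (Fin m) → ℚ :=
  fun I => if X = I then 1 else 0

lemma alphaFun_single {A : Type*} [Fintype A] [DecidableEq A] (C1 C2 : Finset A)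
    (π : Vote A) :
    alphaFun C1 C2 (Pi.single π (1:ℚ)) = eind (π.pos C1) - eind (π.pos C2) := by
  funext I
  unfold alphaFun
  simp only [Pi.single_apply, ite_mul, one_mul, zero_mul]
  rw [Finset.sum_ite_eq' Finset.univ π
    (fun π' => ((if π'.pos C1 = I then 1 else 0) - (if π'.pos C2 = I then 1 else 0)))]
  simp [eind, Pi.sub_apply]

lemma alphaMap_single {A : Type*} [Fintype A] [DecidableEq A] (C1 C2 : Finset A)
    (π : Vote A) :
    alphaMap C1 C2 (Pi.single π (1:ℚ)) = eind (π.pos C1) - eind (π.pos C2) :=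
  alphaFun_single C1 C2 π

lemma alphaFun_eq_sum {A : Type*} [Fintype A] [DecidableEq A] (C1 C2 : Finset A)
    (P : Vote A → ℚ) :
    alphaFun C1 C2 P = ∑ π : Vote A, P π • (eind (π.pos C1) - eind (π.pos C2)) := by
  funext I
  rw [Finset.sum_apply]
  unfold alphaFun
  simp [eind, smul_eq_mul]

lemma exists_vote_adj {A : Type*} [Fintype A] [DecidableEq A] {k : ℕ}
    {C1 C2 : Finset A} (hC1 : C1.card = k) (hC2 : C2.card = k)
    (hinter : (C1 ∩ C2).card = k - 1)
    {I : Finset (Fin (Fintype.card A))} (hI : I.card = k)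
    {p q : Fin (Fintype.card A)} (hp : p ∈ I) (hq : q ∉ I) :
    ∃ π : Vote A, π.pos C1 = I ∧ π.pos C2 = insert q (I.erase p) := by
  classical
  have hk1 : 1 ≤ k := by
    have : 0 < I.card := Finset.card_pos.mpr ⟨p, hp⟩
    omega
  have h1 : (C1 \ C2).card = 1 := by
    have := Finset.card_sdiff_add_card_inter C1 C2
    omega
  have h2 : (C2 \ C1).card = 1 := by
    have := Finset.card_sdiff_add_card_inter C2 C1
    rw [Finset.inter_comm] at this
    omega
  obtain ⟨a, ha⟩ := Finset.card_eq_one.mp h1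
  obtain ⟨b, hb⟩ := Finset.card_eq_one.mp h2
  have haC1 : a ∈ C1 := (Finset.mem_sdiff.mp (ha ▸ Finset.mem_singleton_self a)).1
  have haC2 : a ∉ C2 := (Finset.mem_sdiff.mp (ha ▸ Finset.mem_singleton_self a)).2
  have hbC2 : b ∈ C2 := (Finset.mem_sdiff.mp (hb ▸ Finset.mem_singleton_self b)).1
  have hbC1 : b ∉ C1 := (Finset.mem_sdiff.mp (hb ▸ Finset.mem_singleton_self b)).2
  have hab : a ≠ b := fun h => haC2 (h ▸ hbC2)
  -- membership decomposition of C1 and C2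
  have hC1mem : ∀ x ∈ C1, x = a ∨ x ∈ C1 ∩ C2 := by
    intro x hx
    by_cases hxa : x = a
    · exact Or.inl hxa
    · refine Or.inr (Finset.mem_inter.mpr ⟨hx, ?_⟩)
      by_contra hxC2
      have hmem : x ∈ C1 \ C2 := Finset.mem_sdiff.mpr ⟨hx, hxC2⟩
      rw [ha, Finset.mem_singleton] at hmem
      exact hxa hmem
  have hC2mem : ∀ x ∈ C2, x = b ∨ x ∈ C1 ∩ C2 := by
    intro x hx
    by_cases hxb : x = b
    · exact Or.inl hxb
    · right
      refine Finset.mem_inter.mpr ⟨?_, hx⟩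
      by_contra hxC1
      have : x ∈ C2 \ C1 := Finset.mem_sdiff.mpr ⟨hx, hxC1⟩
      rw [hb, Finset.mem_singleton] at this
      exact hxb this
  -- the partial injection
  have hcards : (C1 ∩ C2).card = (I.erase p).card := by
    rw [hinter, Finset.card_erase_of_mem hp, hI]
  let g : (C1 ∩ C2 : Finset A) ≃ (I.erase p : Finset (Fin (Fintype.card A))) :=
    Finset.equivOfCardEq hcards
  let f : A → Fin (Fintype.card A) := fun x =>
    if hx : x ∈ C1 ∩ C2 then (g ⟨x, hx⟩ : Fin (Fintype.card A))
    else if x = a then p else if x = b then q else p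
  have haint : a ∉ C1 ∩ C2 := fun h => haC2 (Finset.mem_inter.mp h).2
  have hbint : b ∉ C1 ∩ C2 := fun h => hbC1 (Finset.mem_inter.mp h).1
  have hfa : f a = p := by
    simp only [f]; rw [dif_neg haint]; simp
  have hfb : f b = q := by
    simp only [f]; rw [dif_neg hbint, if_neg (fun h => hab h.symm)]; simp
  have hfint : ∀ x (hx : x ∈ C1 ∩ C2), f x = (g ⟨x, hx⟩ : Fin (Fintype.card A)) := by
    intro x hx; simp only [f]; rw [dif_pos hx]
  have hqp : q ≠ p := fun h => hq (h ▸ hp)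
  have hgmem : ∀ x (hx : x ∈ C1 ∩ C2), f x ∈ I.erase p := by
    intro x hx; rw [hfint x hx]; exact (g ⟨x, hx⟩).2
  -- injectivity on insert b C1
  have hinj : Set.InjOn f (insert b C1 : Finset A) := by
    intro x hx y hy hxy
    simp only [Finset.coe_insert, Set.mem_insert_iff, Finset.mem_coe] at hx hy
    have hcase : ∀ z, z = b ∨ z ∈ C1 → z = a ∨ z = b ∨ z ∈ C1 ∩ C2 := by
      rintro z (rfl | hz)
      · exact Or.inr (Or.inl rfl)
      · rcases hC1mem z hz with h | h
        · exact Or.inl h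
        · exact Or.inr (Or.inr h)
    rcases hcase x hx with rfl | rfl | hxi
    · rcases hcase y hy with rfl | rfl | hyi
      · rfl
      · rw [hfa, hfb] at hxy; exact absurd hxy.symm hqp
      · rw [hfa, hfint y hyi] at hxy
        exact absurd hxy.symm (Finset.ne_of_mem_erase (g ⟨y, hyi⟩).2)
    · rcases hcase y hy with rfl | rfl | hyi
      · rw [hfa, hfb] at hxy; exact absurd hxy hqp
      · rfl
      · rw [hfb, hfint y hyi] at hxy
        have := (g ⟨y, hyi⟩).2
        rw [← hxy] at this
        exact absurd (Finset.mem_of_mem_erase this) hq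
    · rcases hcase y hy with rfl | rfl | hyi
      · rw [hfa, hfint x hxi] at hxy
        exact absurd hxy (Finset.ne_of_mem_erase (g ⟨x, hxi⟩).2)
      · rw [hfb, hfint x hxi] at hxy
        have := (g ⟨x, hxi⟩).2
        rw [hxy] at this
        exact absurd (Finset.mem_of_mem_erase this) hq
      · rw [hfint x hxi, hfint y hyi] at hxy
        have := g.injective (Subtype.coe_injective hxy)
        exact congrArg Subtype.val this
  -- extend to an equiv
  have hαt : Fintype.card A = (Finset.univ : Finset (Fin (Fintype.card A))).card := by simp
  have hsub : Finset.image f (insert b C1) ⊆ Finset.univ := Finset.subset_univ _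
  obtain ⟨g0, hg0⟩ := Finset.exists_equiv_extend_of_card_eq hαt hsub hinj
  let π : Vote A := g0.trans (Equiv.subtypeUnivEquiv (fun x => Finset.mem_univ x))
  have hπ : ∀ x ∈ insert b C1, π x = f x := by
    intro x hx
    simpa [π, Equiv.subtypeUnivEquiv] using hg0 x hx
  refine ⟨π, ?_, ?_⟩
  · -- pos C1 = I
    apply Finset.eq_of_subset_of_card_le
    · intro y hy
      rw [Vote.pos, Finset.mem_image] at hy
      obtain ⟨x, hx, rfl⟩ := hy
      rw [hπ x (Finset.mem_insert_of_mem hx)]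
      rcases hC1mem x hx with rfl | hxi
      · rw [hfa]; exact hp
      · exact Finset.mem_of_mem_erase (hgmem x hxi)
    · rw [hI, Vote.pos, Finset.card_image_of_injective _ π.injective, hC1]
  · -- pos C2 = insert q (I.erase p)
    apply Finset.eq_of_subset_of_card_le
    · intro y hy
      rw [Vote.pos, Finset.mem_image] at hy
      obtain ⟨x, hx, rfl⟩ := hy
      rcases hC2mem x hx with rfl | hxi
      · rw [hπ x (Finset.mem_insert_self _ _), hfb]; exact Finset.mem_insert_self _ _
      · have hxC1 : x ∈ C1 := (Finset.mem_inter.mp hxi).1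
        rw [hπ x (Finset.mem_insert_of_mem hxC1)]
        exact Finset.mem_insert_of_mem (hgmem x hxi)
    · rw [Finset.card_insert_of_notMem (fun h => hq (Finset.mem_of_mem_erase h)),
        Finset.card_erase_of_mem hp, hI, Vote.pos,
        Finset.card_image_of_injective _ π.injective, hC2]
      omega

lemma conn_mem {A : Type*} [Fintype A] [DecidableEq A] {k : ℕ}
    {C1 C2 : Finset A} (hC1 : C1.card = k) (hC2 : C2.card = k)
    (hinter : (C1 ∩ C2).card = k - 1) :
    ∀ (n : ℕ) (I J : Finset (Fin (Fintype.card A))), I.card = k → J.card = k →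
      (I \ J).card = n → eind I - eind J ∈ LinearMap.range (alphaMap C1 C2) := by
  intro n
  induction n with
  | zero =>
    intro I J hI hJ hn
    have hIJ : I = J := by
      apply Finset.eq_of_subset_of_card_le _ (by omega)
      rwa [← Finset.sdiff_eq_empty_iff_subset, ← Finset.card_eq_zero]
    rw [hIJ, sub_self]
    exact Submodule.zero_mem _
  | succ n ih =>
    intro I J hI hJ hn
    obtain ⟨p, hpmem⟩ : (I \ J).Nonempty := Finset.card_pos.mp (by omega)
    have hpI : p ∈ I := (Finset.mem_sdiff.mp hpmem).1
    have hpJ : p ∉ J := (Finset.mem_sdiff.mp hpmem).2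
    obtain ⟨q, hqmem⟩ : (J \ I).Nonempty := by
      apply Finset.card_pos.mp
      have h1 := Finset.card_sdiff_add_card_inter I J
      have h2 := Finset.card_sdiff_add_card_inter J I
      rw [Finset.inter_comm] at h2
      omega
    have hqJ : q ∈ J := (Finset.mem_sdiff.mp hqmem).1
    have hqI : q ∉ I := (Finset.mem_sdiff.mp hqmem).2
    set I' := insert q (I.erase p) with hI'def
    have hk1 : 1 ≤ k := by
      have : 0 < I.card := Finset.card_pos.mpr ⟨p, hpI⟩
      omega
    have hI' : I'.card = k := by
      rw [hI'def, Finset.card_insert_of_notMem (fun h => hqI (Finset.mem_of_mem_erase h)),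
        Finset.card_erase_of_mem hpI, hI]
      omega
    have hsd : I' \ J = (I \ J).erase p := by
      ext x
      simp only [hI'def, Finset.mem_sdiff, Finset.mem_insert, Finset.mem_erase]
      constructor
      · rintro ⟨rfl | ⟨hxp, hxI⟩, hxJ⟩
        · exact absurd hqJ hxJ
        · exact ⟨hxp, hxI, hxJ⟩
      · rintro ⟨hxp, hxI, hxJ⟩
        exact ⟨Or.inr ⟨hxp, hxI⟩, hxJ⟩
    have hsd' : (I' \ J).card = n := by
      rw [hsd, Finset.card_erase_of_mem hpmem, hn]
      omega
    obtain ⟨π, hπ1, hπ2⟩ := exists_vote_adj hC1 hC2 hinter hI hpI hqI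
    have hadj : eind I - eind I' ∈ LinearMap.range (alphaMap C1 C2) := by
      refine ⟨Pi.single π 1, ?_⟩
      rw [alphaMap_single, hπ1, hπ2]
    have hrest := ih I' J hI' hJ hsd'
    have hmem := Submodule.add_mem _ hadj hrest
    rwa [sub_add_sub_cancel] at hmem

end Aux

/-- **Lemma (dimension of the range of `α_{C1,C2}`).**
For two size-`k` committees `C1, C2` with `|C1 ∩ C2| = k - 1`, the range of the `ℚ`-linear
map `α_{C1,C2}` has dimension `C(m,k) - 1`. -/
theorem alphaMap_range_finrank {A : Type*} [Fintype A] [DecidableEq A] {k : ℕ}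
    (hk : k ≤ Fintype.card A) (C1 C2 : Finset A)
    (hC1 : C1.card = k) (hC2 : C2.card = k) (hinter : (C1 ∩ C2).card = k - 1) :
    Module.finrank ℚ (LinearMap.range (alphaMap C1 C2)) =
      Nat.choose (Fintype.card A) k - 1 := by
  classical
  obtain ⟨I0, -, hI0⟩ := Finset.exists_subset_card_eq
    (s := (Finset.univ : Finset (Fin (Fintype.card A)))) (n := k) (by simpa using hk)
  set v : {I : Finset (Fin (Fintype.card A)) // I.card = k ∧ I ≠ I0} →
      (Finset (Fin (Fintype.card A)) → ℚ) := fun i => eind i.1 - eind I0 with hv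
  have key : ∀ X : Finset (Fin (Fintype.card A)), X.card = k →
      eind X - eind I0 ∈ Submodule.span ℚ (Set.range v) := by
    intro X hX
    by_cases hXI : X = I0
    · rw [hXI, sub_self]; exact Submodule.zero_mem _
    · exact Submodule.subset_span ⟨⟨X, hX, hXI⟩, rfl⟩
  have hrange : LinearMap.range (alphaMap C1 C2) = Submodule.span ℚ (Set.range v) := by
    apply le_antisymm
    · rintro x ⟨P, rfl⟩
      have hP : alphaMap C1 C2 P
          = ∑ π : Vote A, P π • (eind (π.pos C1) - eind (π.pos C2)) :=
        alphaFun_eq_sum C1 C2 P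
      rw [hP]
      refine Submodule.sum_mem _ (fun π _ => Submodule.smul_mem _ _ ?_)
      have hcard1 : (π.pos C1).card = k := by
        rw [Vote.pos, Finset.card_image_of_injective _ π.injective, hC1]
      have hcard2 : (π.pos C2).card = k := by
        rw [Vote.pos, Finset.card_image_of_injective _ π.injective, hC2]
      have hsplit : eind (π.pos C1) - eind (π.pos C2)
          = (eind (π.pos C1) - eind I0) - (eind (π.pos C2) - eind I0) := by
        abel
      rw [hsplit]
      exact Submodule.sub_mem _ (key _ hcard1) (key _ hcard2)
    · rw [Submodule.span_le]
      rintro x ⟨i, rfl⟩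
      exact conn_mem hC1 hC2 hinter _ i.1 I0 i.2.1 hI0 rfl
  have hli : LinearIndependent ℚ v := by
    rw [Fintype.linearIndependent_iff]
    intro g hg i
    have h0 : ∀ j : {I : Finset (Fin (Fintype.card A)) // I.card = k ∧ I ≠ I0},
        (g j • v j) i.1 = if j = i then g j else 0 := by
      intro j
      have hI0i : I0 ≠ i.1 := fun h => i.2.2 h.symm
      simp only [hv, Pi.smul_apply, Pi.sub_apply, eind, smul_eq_mul, if_neg hI0i]
      by_cases hji : j = i
      · subst hji; simp
      · rw [if_neg (fun h : j.1 = i.1 => hji (Subtype.ext h)), if_neg hji]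
        ring
    have hsum := congrFun hg i.1
    rw [Finset.sum_apply] at hsum
    rw [Finset.sum_congr rfl (fun j _ => h0 j)] at hsum
    rwa [Finset.sum_ite_eq' Finset.univ i g, if_pos (Finset.mem_univ i)] at hsum
  rw [hrange, finrank_span_eq_card hli]
  rw [Fintype.card_subtype]
  have h1 : (Finset.univ.filter fun I : Finset (Fin (Fintype.card A)) => I.card = k ∧ I ≠ I0)
      = (Finset.univ.filter fun I : Finset (Fin (Fintype.card A)) => I.card = k).erase I0 := by
    ext J
    simp only [Finset.mem_filter, Finset.mem_erase, Finset.mem_univ, true_and]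
    tauto
  rw [h1, Finset.card_erase_of_mem (by simp [hI0]), ← Fintype.card_subtype,
    Fintype.card_finset_len, Fintype.card_fin]
end

section
/- A set S ⊆ ℝ^n is ℚ-convex if and only if S = ℚ^n ∩ conv(S), where conv(S) denotes the convex hull of S in ℝ^n. -/
/-- A point of `ℝ^n` all of whose coordinates are rational. -/
def RatPoint {n : ℕ} (x : Fin n → ℝ) : Prop := ∀ i, ∃ q : ℚ, x i = (q : ℝ)

/-- A set `S ⊆ ℝ^n` is `ℚ`-convex if `S ⊆ ℚ^n` and `S` is closed under convex
combinations with rational coefficients. -/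
def QConvex {n : ℕ} (S : Set (Fin n → ℝ)) : Prop :=
  (∀ x ∈ S, RatPoint x) ∧
  ∀ s1 ∈ S, ∀ s2 ∈ S, ∀ q : ℚ, 0 ≤ q → q ≤ 1 →
    (q : ℝ) • s1 + ((1 : ℝ) - (q : ℝ)) • s2 ∈ S

/-- There is a `ℚ`-linear retraction of `ℝ` onto the rationals. -/
lemma exists_rat_retraction :
    ∃ π : ℝ →ₗ[ℚ] ℝ, (∀ q : ℚ, π (q : ℝ) = (q : ℝ)) ∧ ∀ x : ℝ, ∃ q : ℚ, π x = (q : ℝ) := by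
  set K : Submodule ℚ ℝ := Submodule.span ℚ {(1 : ℝ)} with hK
  obtain ⟨K', hcompl⟩ := K.exists_isCompl
  refine ⟨K.subtype.comp (Submodule.projectionOnto K K' hcompl), ?_, ?_⟩
  · intro q
    have hq : (q : ℝ) ∈ K := by
      rw [hK, Submodule.mem_span_singleton]
      exact ⟨q, by simp [Rat.smul_def]⟩
    simp [Submodule.projectionOnto_apply_left hcompl ⟨(q : ℝ), hq⟩]
  · intro x
    have hx : (Submodule.projectionOnto K K' hcompl x : ℝ) ∈ K :=
      (Submodule.projectionOnto K K' hcompl x).2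
    obtain ⟨q, hq⟩ := Submodule.mem_span_singleton.1 hx
    exact ⟨q, by simp [← hq, Rat.smul_def]⟩

/-- Barycentric coordinates of a rational point w.r.t. affinely independent
rational points are rational. -/
lemma rat_weights {n : ℕ} {ι : Type*} [Fintype ι] {z : ι → Fin n → ℝ}
    (hz : ∀ i, RatPoint (z i)) {x : Fin n → ℝ} (hx : RatPoint x) {w : ι → ℝ}
    (hw1 : ∑ i, w i = 1) (hcomb : ∑ i, w i • z i = x)
    (hind : AffineIndependent ℝ z) : ∀ i, ∃ q : ℚ, w i = (q : ℝ) := by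
  obtain ⟨π, hπq, hπr⟩ := exists_rat_retraction
  set w' : ι → ℝ := fun i => π (w i) with hw'
  have key : ∀ r : ℝ, ∀ q : ℚ, π (r * (q : ℝ)) = π r * (q : ℝ) := by
    intro r q
    have : r * (q : ℝ) = q • r := by rw [Rat.smul_def]; ring
    rw [this, map_smul, Rat.smul_def]; ring
  have hsum' : ∑ i, w' i = 1 := by
    have := map_sum π w Finset.univ
    rw [hw1] at this
    have h1 : π (1 : ℝ) = 1 := by simpa using hπq 1
    simp only [hw']
    rw [← this, h1]
  have hcomb' : ∑ i, w' i • z i = x := by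
    funext j
    obtain ⟨qx, hqx⟩ := hx j
    have hline : ∑ i, w i * z i j = x j := by
      have := congrFun hcomb j
      simpa [Finset.sum_apply] using this
    have : π (∑ i, w i * z i j) = ∑ i, w' i * z i j := by
      rw [map_sum]
      refine Finset.sum_congr rfl fun i _ => ?_
      obtain ⟨q, hq⟩ := hz i j
      rw [hq, key]
    rw [hline, hqx, hπq] at this
    simpa [Finset.sum_apply, ← hqx] using this.symm
  have huniq : w' = w := by
    have h1 : Finset.univ.affineCombination ℝ z w' = Finset.univ.affineCombination ℝ z w := by
      rw [Finset.affineCombination_eq_linear_combination _ _ _ hsum',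
        Finset.affineCombination_eq_linear_combination _ _ _ hw1, hcomb, hcomb']
    have := hind.indicator_eq_of_affineCombination_eq Finset.univ Finset.univ w' w hsum' hw1 h1
    simpa [Set.indicator_univ] using this
  intro i
  obtain ⟨q, hq⟩ := hπr (w i)
  exact ⟨q, by rw [← congrFun huniq i]; exact hq⟩

/-- A `ℚ`-convex set is closed under finite rational convex combinations. -/
lemma qconvex_sum_mem {n : ℕ} {S : Set (Fin n → ℝ)} (hS : QConvex S) {ι : Type*}
    (t : Finset ι) (w : ι → ℚ) (z : ι → Fin n → ℝ)
    (hw0 : ∀ i ∈ t, 0 ≤ w i) (hw1 : ∑ i ∈ t, w i = 1) (hz : ∀ i ∈ t, z i ∈ S) :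
    ∑ i ∈ t, ((w i : ℝ)) • z i ∈ S := by
  classical
  induction t using Finset.induction_on generalizing w with
  | empty => simp at hw1
  | @insert a t ha ih =>
    rw [Finset.sum_insert ha] at hw1 ⊢
    have hwa0 : 0 ≤ w a := hw0 a (Finset.mem_insert_self a t)
    have hc0 : 0 ≤ ∑ i ∈ t, w i :=
      Finset.sum_nonneg fun i hi => hw0 i (Finset.mem_insert_of_mem hi)
    have hza : z a ∈ S := hz a (Finset.mem_insert_self a t)
    rcases eq_or_lt_of_le hc0 with hc | hc
    · have hall : ∀ i ∈ t, w i = 0 := by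
        intro i hi
        exact (Finset.sum_eq_zero_iff_of_nonneg
          fun i hi => hw0 i (Finset.mem_insert_of_mem hi)).mp hc.symm i hi
      have hwa : w a = 1 := by rw [← hc] at hw1; simpa using hw1
      have : ∑ i ∈ t, ((w i : ℝ)) • z i = 0 := by
        refine Finset.sum_eq_zero fun i hi => ?_
        rw [hall i hi]; simp
      rw [this, hwa]; simpa using hza
    · set c : ℚ := ∑ i ∈ t, w i with hcdef
      set w' : ι → ℚ := fun i => w i / c with hw'def
      have hy : ∑ i ∈ t, ((w' i : ℝ)) • z i ∈ S := by
        refine ih w' (fun i hi => div_nonneg (hw0 i (Finset.mem_insert_of_mem hi)) hc0) ?_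
          (fun i hi => hz i (Finset.mem_insert_of_mem hi))
        rw [hw'def, ← Finset.sum_div, ← hcdef, div_self hc.ne']
      have hwa1 : w a ≤ 1 := by linarith
      have := hS.2 (z a) hza _ hy (w a) hwa0 hwa1
      have hrw : ((1 : ℝ) - (w a : ℝ)) • ∑ i ∈ t, ((w' i : ℝ)) • z i
          = ∑ i ∈ t, ((w i : ℝ)) • z i := by
        have h1c : (1 : ℝ) - (w a : ℝ) = (c : ℝ) := by
          have h2 : ((w a : ℝ)) + (c : ℝ) = 1 := by exact_mod_cast hw1
          linarith
        rw [h1c, Finset.smul_sum]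
        refine Finset.sum_congr rfl fun i hi => ?_
        rw [smul_smul, hw'def]
        congr 1
        push_cast
        field_simp
      rw [hrw] at this
      exact this

/-- **Lemma (Young).** A set `S ⊆ ℝ^n` is `ℚ`-convex if and only if
`S = ℚ^n ∩ conv(S)`. -/
theorem qConvex_iff_eq_ratPoints_inter_convexHull {n : ℕ} (S : Set (Fin n → ℝ)) :
    QConvex S ↔ S = {x | RatPoint x} ∩ convexHull ℝ S := by
  constructor
  · intro hS
    apply Set.Subset.antisymm
    · intro x hx
      exact ⟨hS.1 x hx, subset_convexHull ℝ S hx⟩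
    · rintro x ⟨hxr, hxc⟩
      obtain ⟨ι, hfin, z, w, hzS, hind, hwpos, hw1, hcomb⟩ :=
        eq_pos_convex_span_of_mem_convexHull hxc
      have hz : ∀ i, RatPoint (z i) := fun i => hS.1 (z i) (hzS ⟨i, rfl⟩)
      have hrat := rat_weights hz hxr hw1 hcomb hind
      choose q hq using hrat
      have : ∑ i, ((q i : ℝ)) • z i ∈ S := by
        refine qconvex_sum_mem hS Finset.univ q z
          (fun i _ => ?_) ?_ (fun i _ => hzS ⟨i, rfl⟩)
        · have := (hwpos i).le
          rw [hq i] at this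
          exact_mod_cast this
        · have : ((∑ i, q i : ℚ) : ℝ) = 1 := by
            push_cast
            rw [← hw1]
            exact Finset.sum_congr rfl fun i _ => (hq i).symm
          exact_mod_cast this
      have hxe : ∑ i, ((q i : ℝ)) • z i = x := by
        rw [← hcomb]
        exact Finset.sum_congr rfl fun i _ => by rw [hq i]
      rwa [hxe] at this
  · intro h
    constructor
    · intro x hx
      rw [h] at hx
      exact hx.1
    · intro s1 hs1 s2 hs2 q hq0 hq1
      rw [h] at hs1 hs2 ⊢
      refine ⟨?_, ?_⟩
      · intro i
        obtain ⟨a, ha⟩ := hs1.1 i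
        obtain ⟨b, hb⟩ := hs2.1 i
        refine ⟨q * a + (1 - q) * b, ?_⟩
        simp only [Pi.add_apply, Pi.smul_apply, smul_eq_mul, ha, hb]
        push_cast
        ring
      · exact (convex_convexHull ℝ S) hs1.2 hs2.2 (by exact_mod_cast hq0)
          (by rw [sub_nonneg]; exact_mod_cast hq1) (by ring)
end

section
/- Let f be a k-decision rule on integer voting situations ℕ^L that is neutral, independent of symmetric profiles (f(P + ℓ·e) = f(P) for all P ∈ ℕ^L and ℓ ∈ ℕ, where e is the voting situation assigning multiplicity 1 to every vote), and homogeneous (f(ℓ·P) = f(P) for all P ∈ ℕ^L and positive ℓ ∈ ℕ). Then there exists a unique k-decision rule g on rational voting situations ℚ^L such that g agrees with f on ℕ^L and, for every Q ∈ ℚ^L and every positive integer ℓ, g(Q − ℓ·e) = g(Q) and g(Q/ℓ) = g(Q). -/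
open Finset

section Aux

variable {A : Type*} [Fintype A] [DecidableEq A] {k : ℕ}

lemma DecisionRule.ext' {R : Type*} {g g' : DecisionRule A k R} (h : g.F = g'.F) : g = g' := by
  cases g; cases g'; simpa using h

lemma exists_rep (Q : Vote A → ℚ) :
    ∃ P : Vote A → ℕ, ∃ d n : ℕ, 0 < d ∧ 0 < n ∧ ∀ π, Q π = ((P π : ℚ) - n) / d := by
  classical
  set d : ℕ := ∏ π : Vote A, (Q π).den with hdef
  have hd : 0 < d := Finset.prod_pos fun π _ => (Q π).pos
  have hz : ∀ π : Vote A, ∃ z : ℤ, (d : ℚ) * Q π = z := by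
    intro π
    obtain ⟨c, hc⟩ : (Q π).den ∣ d := Finset.dvd_prod_of_mem _ (Finset.mem_univ π)
    refine ⟨(Q π).num * c, ?_⟩
    have hden : ((Q π).den : ℚ) ≠ 0 := by exact_mod_cast (Q π).pos.ne'
    have hnum : ((Q π).num : ℚ) = Q π * (Q π).den := by
      exact (Rat.mul_den_eq_num (Q π)).symm
    rw [hc]
    push_cast
    rw [hnum]
    ring
  choose z hzq using hz
  set n : ℕ := 1 + Finset.univ.sup (fun π : Vote A => (-(z π)).toNat) with hndef
  have hnpos : 0 < n := by omega
  have hzn : ∀ π, 0 ≤ z π + n := by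
    intro π
    have h1 : (-(z π)).toNat ≤ Finset.univ.sup (fun π : Vote A => (-(z π)).toNat) :=
      Finset.le_sup (f := fun π : Vote A => (-(z π)).toNat) (Finset.mem_univ π)
    omega
  refine ⟨fun π => (z π + n).toNat, d, n, hd, hnpos, fun π => ?_⟩
  have hP : (((z π + n).toNat : ℕ) : ℚ) = ((z π : ℚ) + n) := by
    have h0 := Int.toNat_of_nonneg (hzn π)
    exact_mod_cast congrArg (fun x : ℤ => (x : ℚ)) h0
  have hdne : (d : ℚ) ≠ 0 := by exact_mod_cast hd.ne'
  rw [hP]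
  field_simp
  linarith [hzq π]

lemma rep_eq (f : DecisionRule A k ℕ)
    (hind : ∀ (P : Vote A → ℕ) (ℓ : ℕ) (C1 C2 : Committee A k),
      f.F (P + ℓ • (fun _ => (1 : ℕ))) C1 C2 = f.F P C1 C2)
    (hhom : ∀ (P : Vote A → ℕ) (ℓ : ℕ), 0 < ℓ → ∀ (C1 C2 : Committee A k),
      f.F (ℓ • P) C1 C2 = f.F P C1 C2)
    (P₁ P₂ : Vote A → ℕ) (d₁ d₂ n₁ n₂ : ℕ) (hd₁ : 0 < d₁) (hd₂ : 0 < d₂)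
    (h : ∀ π, ((P₁ π : ℚ) - n₁) / d₁ = ((P₂ π : ℚ) - n₂) / d₂)
    (C1 C2 : Committee A k) : f.F P₁ C1 C2 = f.F P₂ C1 C2 := by
  have key : d₂ • P₁ + (d₁ * n₂) • (fun _ => (1 : ℕ))
      = d₁ • P₂ + (d₂ * n₁) • (fun _ => (1 : ℕ)) := by
    funext π
    have hq := h π
    have hd1 : (d₁ : ℚ) ≠ 0 := by exact_mod_cast hd₁.ne'
    have hd2 : (d₂ : ℚ) ≠ 0 := by exact_mod_cast hd₂.ne'
    rw [div_eq_div_iff hd1 hd2] at hq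
    have : ((d₂ * P₁ π + d₁ * n₂ : ℕ) : ℚ) = ((d₁ * P₂ π + d₂ * n₁ : ℕ) : ℚ) := by
      push_cast; nlinarith [hq]
    simp only [Pi.add_apply, Pi.smul_apply, smul_eq_mul, mul_one]
    exact_mod_cast this
  calc f.F P₁ C1 C2 = f.F (d₂ • P₁) C1 C2 := (hhom _ _ hd₂ _ _).symm
    _ = f.F (d₂ • P₁ + (d₁ * n₂) • (fun _ => (1 : ℕ))) C1 C2 := (hind _ _ _ _).symm
    _ = f.F (d₁ • P₂ + (d₂ * n₁) • (fun _ => (1 : ℕ))) C1 C2 := by rw [key]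
    _ = f.F (d₁ • P₂) C1 C2 := hind _ _ _ _
    _ = f.F P₂ C1 C2 := hhom _ _ hd₁ _ _

end Aux

/-- **Lemma (Young, Merlin: unique extension to rational voting situations).**
Let `f` be a neutral `k`-decision rule on integer voting situations that is independent of
symmetric profiles and homogeneous. Then there is a unique `k`-decision rule `g` on
rational voting situations that agrees with `f` on integer voting situations and satisfies
`g(Q - ℓ·e) = g(Q)` and `g(Q/ℓ) = g(Q)` for every rational voting situation `Q` and every
positive integer `ℓ`, where `e` is the null profile assigning multiplicity `1` to every
vote. -/
theorem unique_extension_to_rationals {A : Type*} [Fintype A] [DecidableEq A] {k : ℕ}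
    (hk : k ≤ Fintype.card A) (f : DecisionRule A k ℕ) (hneu : f.Neutral)
    (hind : ∀ (P : Vote A → ℕ) (ℓ : ℕ) (C1 C2 : Committee A k),
      f.F (P + ℓ • (fun _ => (1 : ℕ))) C1 C2 = f.F P C1 C2)
    (hhom : ∀ (P : Vote A → ℕ) (ℓ : ℕ), 0 < ℓ → ∀ (C1 C2 : Committee A k),
      f.F (ℓ • P) C1 C2 = f.F P C1 C2) :
    ∃! g : DecisionRule A k ℚ,
      (∀ (P : Vote A → ℕ) (C1 C2 : Committee A k),
        g.F (fun v => (P v : ℚ)) C1 C2 = f.F P C1 C2) ∧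
      (∀ (Q : Vote A → ℚ) (ℓ : ℕ), 0 < ℓ → ∀ (C1 C2 : Committee A k),
        g.F (Q - ℓ • (fun _ => (1 : ℚ))) C1 C2 = g.F Q C1 C2 ∧
        g.F ((ℓ : ℚ)⁻¹ • Q) C1 C2 = g.F Q C1 C2) := by
  classical
  choose P d n hd hn hrep using fun Q : Vote A → ℚ => exists_rep Q
  set g : DecisionRule A k ℚ :=
    { F := fun Q => f.F (P Q)
      antisymm := fun Q => f.antisymm (P Q)
      mem_range := fun Q => f.mem_range (P Q) } with hg
  have gval : ∀ (Q : Vote A → ℚ) (P' : Vote A → ℕ) (d' n' : ℕ), 0 < d' →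
      (∀ π, Q π = ((P' π : ℚ) - n') / d') →
      ∀ C1 C2, g.F Q C1 C2 = f.F P' C1 C2 := by
    intro Q P' d' n' hd' h' C1 C2
    exact rep_eq f hind hhom (P Q) P' (d Q) d' (n Q) n' (hd Q) hd'
      (fun π => ((hrep Q π).symm.trans (h' π))) C1 C2
  refine ⟨g, ⟨?_, ?_⟩, ?_⟩
  · intro P0 C1 C2
    exact gval _ P0 1 0 one_pos (fun π => by norm_num) C1 C2
  · intro Q ℓ hℓ C1 C2
    have hdQ : (d Q : ℚ) ≠ 0 := by exact_mod_cast (hd Q).ne'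
    have hgQ : g.F Q C1 C2 = f.F (P Q) C1 C2 := rfl
    constructor
    · rw [hgQ]
      refine gval _ (P Q) (d Q) (n Q + d Q * ℓ) (hd Q) (fun π => ?_) C1 C2
      simp only [Pi.sub_apply, Pi.smul_apply, smul_eq_mul, mul_one]
      rw [hrep Q π]
      push_cast
      field_simp
      ring_nf
    · rw [hgQ]
      have hℓQ : (ℓ : ℚ) ≠ 0 := by exact_mod_cast hℓ.ne'
      refine gval _ (P Q) (d Q * ℓ) (n Q) (Nat.mul_pos (hd Q) hℓ) (fun π => ?_) C1 C2
      simp only [Pi.smul_apply, smul_eq_mul]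
      rw [hrep Q π, inv_mul_eq_div, div_div]
      push_cast
      ring_nf
  · intro g' ⟨hag, hprop⟩
    refine DecisionRule.ext' ?_
    funext Q C1 C2
    have hdQ : (d Q : ℚ) ≠ 0 := by exact_mod_cast (hd Q).ne'
    set castP : Vote A → ℚ := fun π => ((P Q π : ℕ) : ℚ) with hcp
    have h2 := (hprop (castP - (n Q) • (fun _ => (1 : ℚ))) (d Q) (hd Q) C1 C2).2
    have h1 := (hprop castP (n Q) (hn Q) C1 C2).1
    have hQeq : (d Q : ℚ)⁻¹ • (castP - (n Q) • (fun _ => (1 : ℚ))) = Q := by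
      funext π
      simp only [Pi.smul_apply, Pi.sub_apply, smul_eq_mul, mul_one]
      rw [hrep Q π]
      field_simp
      simp [hcp]
    rw [hQeq] at h2
    rw [h2, h1]
    exact hag (P Q) C1 C2
end

section
/- Every neutral and consistent k-decision rule f on integer voting situations is homogeneous and independent of symmetric profiles; that is, for every P ∈ ℕ^L, every positive integer ℓ, and every ℓ' ∈ ℕ, it holds that f(ℓ·P) = f(P) and f(P + ℓ'·e) = f(P), where e is the voting situation assigning multiplicity 1 to every vote. -/
open Finset

section Aux

variable {A : Type*} [Fintype A] [DecidableEq A] {k : ℕ}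

/-- The involution induced by a bijection between two disjoint finsets. -/
noncomputable def swapFinsetPerm (D1 D2 : Finset A) (g : D1 ≃ D2)
    (hdisj : Disjoint D1 D2) : Equiv.Perm A where
  toFun x := if h : x ∈ D1 then (g ⟨x, h⟩ : A) else
    if h2 : x ∈ D2 then (g.symm ⟨x, h2⟩ : A) else x
  invFun x := if h : x ∈ D1 then (g ⟨x, h⟩ : A) else
    if h2 : x ∈ D2 then (g.symm ⟨x, h2⟩ : A) else x
  left_inv := by
    intro x
    by_cases h1 : x ∈ D1
    · have hm : (g ⟨x, h1⟩ : A) ∈ D2 := (g ⟨x, h1⟩).2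
      have hn : (g ⟨x, h1⟩ : A) ∉ D1 := Finset.disjoint_right.mp hdisj hm
      simp [h1, hn, hm]
    · by_cases h2 : x ∈ D2
      · have hm : (g.symm ⟨x, h2⟩ : A) ∈ D1 := (g.symm ⟨x, h2⟩).2
        simp [h1, h2, hm]
      · simp [h1, h2]
  right_inv := by
    intro x
    by_cases h1 : x ∈ D1
    · have hm : (g ⟨x, h1⟩ : A) ∈ D2 := (g ⟨x, h1⟩).2
      have hn : (g ⟨x, h1⟩ : A) ∉ D1 := Finset.disjoint_right.mp hdisj hm
      simp [h1, hn, hm]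
    · by_cases h2 : x ∈ D2
      · have hm : (g.symm ⟨x, h2⟩ : A) ∈ D1 := (g.symm ⟨x, h2⟩).2
        simp [h1, h2, hm]
      · simp [h1, h2]

lemma key_add (f : DecisionRule A k ℕ) (hcons : f.Consistent)
    (P Q : Vote A → ℕ) (C1 C2 : Committee A k)
    (h : f.F Q C1 C2 = 0 ∨ f.F Q C1 C2 = f.F P C1 C2) :
    f.F (P + Q) C1 C2 = f.F P C1 C2 := by
  have haP := f.antisymm P C1 C2
  have haQ := f.antisymm Q C1 C2
  have haPQ := f.antisymm (P + Q) C1 C2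
  have hrP := f.mem_range P C1 C2
  have hrQ := f.mem_range Q C1 C2
  have hrPQ := f.mem_range (P + Q) C1 C2
  rcases hrP with hP | hP | hP
  · have hP' : f.F P C2 C1 = 1 := by omega
    have hQ' : 0 ≤ f.F Q C2 C1 := by omega
    have h1 := (hcons P Q C2 C1).1 hP' hQ'
    omega
  · have hQ0 : f.F Q C1 C2 = 0 := by omega
    have h1 := (hcons P Q C1 C2).2 (by omega) (by omega)
    have h2 := (hcons P Q C2 C1).2 (by omega) (by omega)
    omega
  · have hQ' : 0 ≤ f.F Q C1 C2 := by omega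
    have h1 := (hcons P Q C1 C2).1 hP hQ'
    omega

lemma null_zero (f : DecisionRule A k ℕ) (hneu : f.Neutral)
    (C1 C2 : Committee A k) :
    f.F (fun _ => (1 : ℕ)) C1 C2 = 0 := by
  classical
  set D1 := C1.1 \ C2.1 with hD1
  set D2 := C2.1 \ C1.1 with hD2
  have hcard : D1.card = D2.card := Finset.card_sdiff_comm (C1.2.trans C2.2.symm)
  have hdisj : Disjoint D1 D2 := disjoint_sdiff_sdiff
  set g := Finset.equivOfCardEq hcard with hg
  set σ := swapFinsetPerm D1 D2 g hdisj with hσ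
  have hmap1 : ∀ a ∈ C1.1, σ a ∈ C2.1 := by
    intro a ha
    by_cases h1 : a ∈ D1
    · have heq : σ a = (g ⟨a, h1⟩ : A) := by simp [hσ, swapFinsetPerm, h1]
      rw [heq]
      exact (Finset.mem_sdiff.mp (g ⟨a, h1⟩).2).1
    · have ha2 : a ∈ C2.1 := by
        by_contra hc
        exact h1 (Finset.mem_sdiff.mpr ⟨ha, hc⟩)
      have h2 : a ∉ D2 := fun hc => (Finset.mem_sdiff.mp hc).2 ha
      have heq : σ a = a := by simp [hσ, swapFinsetPerm, h1, h2]
      rw [heq]; exact ha2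
  have hmap2 : ∀ a ∈ C2.1, σ a ∈ C1.1 := by
    intro a ha
    by_cases h2 : a ∈ D2
    · have h1 : a ∉ D1 := Finset.disjoint_right.mp hdisj h2
      have heq : σ a = (g.symm ⟨a, h2⟩ : A) := by simp [hσ, swapFinsetPerm, h1, h2]
      rw [heq]
      exact (Finset.mem_sdiff.mp (g.symm ⟨a, h2⟩).2).1
    · have ha1 : a ∈ C1.1 := by
        by_contra hc
        exact h2 (Finset.mem_sdiff.mpr ⟨ha, hc⟩)
      have h1 : a ∉ D1 := fun hc => (Finset.mem_sdiff.mp hc).2 ha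
      have heq : σ a = a := by simp [hσ, swapFinsetPerm, h1, h2]
      rw [heq]; exact ha1
  have h12 : permComm σ C1 = C2 := by
    apply Subtype.ext
    apply Finset.eq_of_subset_of_card_le
    · intro x hx
      rcases Finset.mem_image.mp hx with ⟨a, ha, rfl⟩
      exact hmap1 a ha
    · show C2.1.card ≤ (C1.1.image σ).card
      rw [Finset.card_image_of_injective _ σ.injective, C1.2, C2.2]
  have h21 : permComm σ C2 = C1 := by
    apply Subtype.ext
    apply Finset.eq_of_subset_of_card_le
    · intro x hx
      rcases Finset.mem_image.mp hx with ⟨a, ha, rfl⟩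
      exact hmap2 a ha
    · show C1.1.card ≤ (C2.1.image σ).card
      rw [Finset.card_image_of_injective _ σ.injective, C1.2, C2.2]
  have hn := hneu σ (fun _ => (1 : ℕ)) C1 C2
  have hps : permSitu σ (fun _ => (1 : ℕ)) = (fun _ => (1 : ℕ)) := rfl
  rw [hps, h12, h21] at hn
  have ha := f.antisymm (fun _ => (1 : ℕ)) C1 C2
  omega

end Aux

/-- Every neutral and consistent `k`-decision rule on integer voting situations is
homogeneous and independent of symmetric profiles. -/
theorem neutral_consistent_implies_homogeneous_and_independent
    {A : Type*} [Fintype A] [DecidableEq A] {k : ℕ} (hk : k ≤ Fintype.card A)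
    (f : DecisionRule A k ℕ) (hneu : f.Neutral) (hcons : f.Consistent) :
    ∀ (P : Vote A → ℕ) (ℓ ℓ' : ℕ) (C1 C2 : Committee A k), 0 < ℓ →
      f.F (ℓ • P) C1 C2 = f.F P C1 C2 ∧
      f.F (P + ℓ' • (fun _ => (1 : ℕ))) C1 C2 = f.F P C1 C2 := by
  intro P ℓ ℓ' C1 C2 hℓ
  constructor
  · -- homogeneity
    obtain ⟨n, rfl⟩ : ∃ n, ℓ = n + 1 := ⟨ℓ - 1, by omega⟩
    clear hℓ
    induction n with
    | zero => rw [zero_add, one_smul]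
    | succ m ih =>
      have hstep : (m + 1 + 1) • P = (m + 1) • P + P := succ_nsmul P (m + 1)
      rw [hstep]
      rw [show (m + 1) • P + P = P + (m + 1) • P from add_comm _ _]
      exact key_add f hcons P ((m + 1) • P) C1 C2 (Or.inr ih)
  · -- independence of symmetric profiles
    induction ℓ' with
    | zero => rw [zero_nsmul, add_zero]
    | succ m ih =>
      have hstep : (m + 1) • (fun _ => (1 : ℕ) : Vote A → ℕ) =
          m • (fun _ => (1 : ℕ) : Vote A → ℕ) + (fun _ => (1 : ℕ) : Vote A → ℕ) :=
        succ_nsmul _ m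
      rw [hstep, ← add_assoc]
      rw [key_add f hcons (P + m • (fun _ => (1 : ℕ))) (fun _ => (1 : ℕ)) C1 C2
        (Or.inl (null_zero f hneu C1 C2))]
      exact ih
end

section
/- Let C1 and C2 be two size-k committees and let P be a (C1,C2)-symmetric rational voting situation. Then: (1) α_{C1,C2}(P) is the zero vector; and (2) for every neutral, transitive k-decision rule f on rational voting situations, C1 =_P C2. -/
open Finset

/-- A rational voting situation `P` is `(C1, C2)`-symmetric if there is a candidate
permutation `σ` with `σP = P` and a sequence of committees `F 1, …, F x` with
`C1 = F 1 = F x`, `C2 = F 2`, and `σ(F i) = F (i+1)` for `1 ≤ i < x`. -/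
def CCSymmetric {A : Type*} [Fintype A] [DecidableEq A] {k : ℕ}
    (C1 C2 : Committee A k) (P : Vote A → ℚ) : Prop :=
  ∃ (σ : Equiv.Perm A) (x : ℕ) (Fs : ℕ → Finset A),
    2 ≤ x ∧ permSitu σ P = P ∧
    Fs 1 = C1.1 ∧ Fs x = C1.1 ∧ Fs 2 = C2.1 ∧
    ∀ i, 1 ≤ i → i < x → Fs (i + 1) = (Fs i).image σ


/-- Auxiliary: left-translation by `σ.symm` is a bijection on votes. -/
def voteTransEquiv {A : Type*} [Fintype A] (σ : Equiv.Perm A) : Vote A ≃ Vote A where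
  toFun := fun ρ => σ.trans ρ
  invFun := fun ρ => σ.symm.trans ρ
  left_inv := fun ρ => by ext a; simp
  right_inv := fun ρ => by ext a; simp

/-- **Properties of `(C1,C2)`-symmetric voting situations.**
If `P` is a `(C1,C2)`-symmetric rational voting situation, then (1) `α_{C1,C2}(P)` is the
zero vector, and (2) every neutral transitive `k`-decision rule on rational voting
situations declares `C1` and `C2` indifferent at `P`. -/
theorem ccSymmetric_alpha_zero_and_indifferent {A : Type*} [Fintype A] [DecidableEq A]
    {k : ℕ} (hk : k ≤ Fintype.card A) (C1 C2 : Committee A k)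
    (P : Vote A → ℚ) (hP : CCSymmetric C1 C2 P) :
    (∀ I : Finset (Fin (Fintype.card A)), alphaFun C1.1 C2.1 P I = 0) ∧
    (∀ f : DecisionRule A k ℚ, f.Neutral → f.Transitive → f.F P C1 C2 = 0) := by
  obtain ⟨σ, x, Fs, hx, hσ, h1, hx1, h2, hstep⟩ := hP
  have hσ' : ∀ π : Vote A, P (σ.trans π) = P π := fun π => congrFun hσ π
  have key : ∀ (C : Finset A) (I : Finset (Fin (Fintype.card A))),
      (∑ π : Vote A, P π * (if π.pos (C.image σ) = I then (1:ℚ) else 0))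
      = ∑ π : Vote A, P π * (if π.pos C = I then 1 else 0) := by
    intro C I
    refine Fintype.sum_equiv (voteTransEquiv σ) _ _ ?_
    intro ρ
    have hpos : Vote.pos (σ.trans ρ) C = ρ.pos (C.image σ) := by
      ext a
      simp [Vote.pos, Finset.mem_image]
    simp [voteTransEquiv, hpos, hσ' ρ]
  have hC2 : C2.1 = C1.1.image σ := by
    rw [← h2, hstep 1 le_rfl (by omega), h1]
  constructor
  · intro I
    have hsplit : alphaFun C1.1 C2.1 P I
        = (∑ π : Vote A, P π * (if π.pos C1.1 = I then (1:ℚ) else 0))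
          - ∑ π : Vote A, P π * (if π.pos C2.1 = I then (1:ℚ) else 0) := by
      rw [alphaFun, ← Finset.sum_sub_distrib]
      congr 1; ext π; ring
    rw [hsplit, hC2, key]
    ring
  · intro f hneut htrans
    have hcard : ∀ i, 1 ≤ i → i ≤ x → (Fs i).card = k := by
      intro i h1i
      induction i, h1i using Nat.le_induction with
      | base => intro _; rw [h1]; exact C1.2
      | succ n hn ih =>
        intro h
        rw [hstep n hn (by omega), Finset.card_image_of_injective _ σ.injective]
        exact ih (by omega)
    set D : ℕ → Committee A k := fun i => if h : (Fs i).card = k then ⟨Fs i, h⟩ else C1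
      with hDdef
    have hDval : ∀ i, 1 ≤ i → i ≤ x → (D i).1 = Fs i := by
      intro i hi hix
      simp [hDdef, hcard i hi hix]
    have hD1 : D 1 = C1 := Subtype.ext (by rw [hDval 1 le_rfl (by omega), h1])
    have hDx : D x = C1 := Subtype.ext (by rw [hDval x (by omega) le_rfl, hx1])
    have hD2 : D 2 = C2 := Subtype.ext (by rw [hDval 2 (by omega) hx, h2])
    have hperm : ∀ i, 1 ≤ i → i < x → permComm σ (D i) = D (i + 1) := by
      intro i hi hix
      refine Subtype.ext ?_
      show (D i).1.image σ = (D (i+1)).1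
      rw [hDval i hi (by omega), hDval (i+1) (by omega) (by omega), hstep i hi hix]
    have hFstep : ∀ i j, 1 ≤ i → i < x → 1 ≤ j → j < x →
        f.F P (D (i+1)) (D (j+1)) = f.F P (D i) (D j) := by
      intro i j hi hix hj hjx
      have h := hneut σ P (D i) (D j)
      rw [hσ, hperm i hi hix, hperm j hj hjx] at h
      exact h
    have hchain : ∀ i, 1 ≤ i → i < x →
        f.F P (D i) (D (i+1)) = f.F P (D 1) (D 2) := by
      intro i hi
      induction i, hi using Nat.le_induction with
      | base => intro _; rfl
      | succ n hn ih =>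
        intro h
        rw [hFstep n (n+1) hn (by omega) (by omega) h]
        exact ih (by omega)
    have hself : ∀ C : Committee A k, f.F P C C = 0 := by
      intro C
      have h := f.antisymm P C C
      omega
    rcases f.mem_range P C1 C2 with h | h | h
    · -- F C1 C2 = -1 : chain F (D j) (D 2) ≥ 0 up to j = x
      have hrev : ∀ i, 1 ≤ i → i < x → 0 ≤ f.F P (D (i+1)) (D i) := by
        intro i hi hix
        have ha := f.antisymm P (D i) (D (i+1))
        rw [hchain i hi hix, hD1, hD2, h] at ha
        omega
      have hge : ∀ j, 2 ≤ j → j ≤ x → 0 ≤ f.F P (D j) (D 2) := by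
        intro j hj
        induction j, hj using Nat.le_induction with
        | base => intro _; rw [hself]
        | succ n hn ih =>
          intro hnx
          exact htrans P (D (n+1)) (D n) (D 2) (hrev n (by omega) (by omega)) (ih (by omega))
      have := hge x hx le_rfl
      rw [hDx, hD2, h] at this
      omega
    · exact h
    · -- F C1 C2 = 1 : chain F (D 2) (D j) ≥ 0 up to j = x
      have hfwd : ∀ i, 1 ≤ i → i < x → 0 ≤ f.F P (D i) (D (i+1)) := by
        intro i hi hix
        rw [hchain i hi hix, hD1, hD2, h]
        omega
      have hge : ∀ j, 2 ≤ j → j ≤ x → 0 ≤ f.F P (D 2) (D j) := by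
        intro j hj
        induction j, hj using Nat.le_induction with
        | base => intro _; rw [hself]
        | succ n hn ih =>
          intro hnx
          exact htrans P (D 2) (D n) (D (n+1)) (ih (by omega)) (hfwd n (by omega) (by omega))
      have h2x := hge x hx le_rfl
      rw [hDx, hD2] at h2x
      have ha := f.antisymm P C1 C2
      omega
end
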